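/- Training-conditional coverage for jackknife+: under uniform stability with constant c_{n−1}, bi-Lipschitz parametrization (κ₁, κ₂), and a bound L_{n−1} on the density of |Y₁ − μ_{β̄₋₁}(X₁)|, for all ε, δ > 0: P( P_e^{J+}(D_n) > α + √(log(2/δ)/(2n)) + 2 L_{n−1} κ₂ c_{n−1} ( 1/κ₁ + √( (n/(2κ₁²)) log(2p/ε) ) ) ) ≤ ε + δ. -/

import Mathlib

open MeasureTheory ProbabilityTheory BoundedContinuousFunction

/-- The `k`-th smallest element (1-indexed) of the values of `f : Fin n → ℝ`,
viewed in `EReal`; it is `⊥` when `k = 0` and `⊤` when `k > n`. -/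
noncomputable def kthSmallest {n : ℕ} (f : Fin n → ℝ) (k : ℕ) : EReal :=
  if h : 1 ≤ k ∧ k ≤ n then ((f ((Tuple.sort f) ⟨k - 1, by omega⟩) : ℝ) : EReal)
  else if k = 0 then ⊥ else ⊤


open Real

section Helpers

/-- analytic core of Hoeffding's lemma -/
lemma hoeffding_core {q h : ℝ} (hq0 : 0 ≤ q) (hq1 : q ≤ 1) :
    Real.log (1 - q + q * Real.exp h) ≤ q * h + h ^ 2 / 8 := by
  set u : ℝ → ℝ := fun t => 1 - q + q * Real.exp t with hu_def
  have hu_pos : ∀ t, 0 < u t := by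
    intro t
    rcases eq_or_lt_of_le hq0 with h0 | h0
    · simp [hu_def, ← h0]
    · have := mul_pos h0 (Real.exp_pos t)
      simp only [hu_def]; linarith
  have hu_deriv : ∀ t, HasDerivAt u (q * Real.exp t) t := by
    intro t
    exact ((Real.hasDerivAt_exp t).const_mul q).const_add (1 - q)
  set r : ℝ → ℝ := fun t => q * Real.exp t / u t with hr_def
  have hr_nonneg : ∀ t, 0 ≤ r t :=
    fun t => div_nonneg (mul_nonneg hq0 (Real.exp_pos t).le) (hu_pos t).le
  have hr_le_one : ∀ t, r t ≤ 1 := by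
    intro t
    rw [hr_def, div_le_one (hu_pos t)]
    simp only [hu_def]; linarith
  set φ : ℝ → ℝ := fun t => Real.log (u t) with hφ_def
  have hφ_deriv : ∀ t, HasDerivAt φ (r t) t := by
    intro t
    have := (hu_deriv t).log (hu_pos t).ne'
    simpa [hr_def, div_eq_mul_inv, mul_comm] using this
  set ψ' : ℝ → ℝ := fun t => q + t / 4 - r t with hψ'_def
  have hr_deriv : ∀ t, HasDerivAt r (r t - (r t) ^ 2) t := by
    intro t
    have h1 : HasDerivAt (fun t => q * Real.exp t) (q * Real.exp t) t :=
      (Real.hasDerivAt_exp t).const_mul q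
    have h2 := h1.div (hu_deriv t) (hu_pos t).ne'
    refine h2.congr_deriv ?_
    have hne := (hu_pos t).ne'
    simp only [hr_def, hu_def] at hne ⊢
    field_simp
  have hψ'_deriv : ∀ t, HasDerivAt ψ' (1 / 4 - (r t - (r t) ^ 2)) t := by
    intro t
    have h1 : HasDerivAt (fun t : ℝ => q + t / 4) (1 / 4) t := by
      simpa using ((hasDerivAt_id t).div_const 4).const_add q
    exact h1.sub (hr_deriv t)
  have hψ'_mono : Monotone ψ' := by
    apply monotone_of_deriv_nonneg
    · exact fun t => (hψ'_deriv t).differentiableAt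
    · intro t
      rw [(hψ'_deriv t).deriv]
      nlinarith [hr_nonneg t, hr_le_one t, sq_nonneg (r t - 1 / 2)]
  have hψ'_zero : ψ' 0 = 0 := by
    simp [hψ'_def, hr_def, hu_def]
  set ψ : ℝ → ℝ := fun t => q * t + t ^ 2 / 8 - φ t with hψ_def
  have hψ_deriv : ∀ t, HasDerivAt ψ (ψ' t) t := by
    intro t
    have h1 : HasDerivAt (fun t : ℝ => q * t + t ^ 2 / 8) (q + t / 4) t := by
      have : HasDerivAt (fun t : ℝ => t ^ 2) (2 * t) t := by
        simpa using hasDerivAt_pow 2 t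
      have := ((hasDerivAt_id t).const_mul q).add (this.div_const 8)
      refine this.congr_deriv ?_; ring
    exact h1.sub (hφ_deriv t)
  have hψ_zero : ψ 0 = 0 := by simp [hψ_def, hφ_def, hu_def]
  have key : 0 ≤ ψ h := by
    rcases le_total 0 h with hh | hh
    · have hmono : MonotoneOn ψ (Set.Ici 0) := by
        apply monotoneOn_of_deriv_nonneg (convex_Ici 0)
        · exact (Continuous.continuousOn (by
            exact continuous_iff_continuousAt.2 fun t => (hψ_deriv t).continuousAt))
        · exact fun t _ => (hψ_deriv t).differentiableAt.differentiableWithinAt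
        · intro t ht
          rw [(hψ_deriv t).deriv]
          have : (0:ℝ) ≤ t := le_of_lt (by simpa using ht)
          calc (0:ℝ) = ψ' 0 := hψ'_zero.symm
          _ ≤ ψ' t := hψ'_mono this
      have := hmono (Set.mem_Ici.2 le_rfl) (Set.mem_Ici.2 hh) hh
      linarith [hψ_zero ▸ this]
    · have hmono : AntitoneOn ψ (Set.Iic 0) := by
        apply antitoneOn_of_deriv_nonpos (convex_Iic 0)
        · exact (Continuous.continuousOn (by
            exact continuous_iff_continuousAt.2 fun t => (hψ_deriv t).continuousAt))
        · exact fun t _ => (hψ_deriv t).differentiableAt.differentiableWithinAt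
        · intro t ht
          rw [(hψ_deriv t).deriv]
          have : t ≤ (0:ℝ) := le_of_lt (by simpa using ht)
          calc ψ' t ≤ ψ' 0 := hψ'_mono this
          _ = 0 := hψ'_zero
      have := hmono (Set.mem_Iic.2 hh) (Set.mem_Iic.2 le_rfl) hh
      linarith [hψ_zero ▸ this]
  have : φ h ≤ q * h + h ^ 2 / 8 := by
    simp only [hψ_def] at key; linarith
  simpa [hφ_def, hu_def] using this

lemma integrable_of_abs_le {γ : Type*} [MeasurableSpace γ] (μ : Measure γ) [IsFiniteMeasure μ]
    {g : γ → ℝ} (hg : AEStronglyMeasurable g μ) (C : ℝ) (h : ∀ x, |g x| ≤ C) :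
    Integrable g μ :=
  ⟨hg, HasFiniteIntegral.of_bounded (C := C) (ae_of_all _ (fun x => by
    rw [Real.norm_eq_abs]; exact h x))⟩

/-- Hoeffding's lemma. -/
lemma hoeffding_mgf {γ : Type*} [MeasurableSpace γ] (μ : Measure γ) [IsProbabilityMeasure μ]
    {d : γ → ℝ} (hd : Measurable d) {a b : ℝ} (habd : ∀ x, d x ∈ Set.Icc a b)
    (hmean : ∫ x, d x ∂μ = 0) (l : ℝ) :
    ∫ x, Real.exp (l * d x) ∂μ ≤ Real.exp (l ^ 2 * (b - a) ^ 2 / 8) := by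
  have hne : Nonempty γ := by
    by_contra hc
    rw [not_nonempty_iff] at hc
    have h1 : (μ Set.univ) = 1 := measure_univ
    rw [Set.univ_eq_empty_iff.2 hc, measure_empty] at h1
    exact zero_ne_one h1
  obtain ⟨x₀⟩ := hne
  have hab : a ≤ b := le_trans (habd x₀).1 (habd x₀).2
  have hdint : Integrable d μ :=
    integrable_of_abs_le μ hd.aestronglyMeasurable (max |a| |b|) (fun x => by
      rcases habd x with ⟨h1, h2⟩
      rw [abs_le]
      constructor
      · calc -(max |a| |b|) ≤ -|a| := by simp
          _ ≤ a := neg_abs_le a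
          _ ≤ d x := h1
      · calc d x ≤ b := h2
          _ ≤ |b| := le_abs_self b
          _ ≤ max |a| |b| := le_max_right _ _)
  have ha0 : a ≤ 0 := by
    have : a ≤ ∫ x, d x ∂μ := by
      rw [show a = ∫ _ : γ, a ∂μ by simp]
      exact integral_mono (by simp) hdint (fun x => (habd x).1)
    rwa [hmean] at this
  have hb0 : 0 ≤ b := by
    have : (∫ x, d x ∂μ) ≤ b := by
      rw [show b = ∫ _ : γ, b ∂μ by simp [integral_const]]
      exact integral_mono hdint (by simp) (fun x => (habd x).2)
    rwa [hmean] at this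
  rcases eq_or_lt_of_le hab with heq | hlt
  · -- a = b, so a = b = 0 and d = 0
    have ha : a = 0 := le_antisymm ha0 (heq ▸ hb0)
    have hd0 : ∀ x, d x = 0 := fun x =>
      le_antisymm (by linarith [(habd x).2]) (by linarith [(habd x).1])
    simp only [hd0, mul_zero, Real.exp_zero]
    rw [integral_const]; simp
    positivity
  · -- a < b
    have hba : (0:ℝ) < b - a := by linarith
    set q : ℝ := -a / (b - a) with hq_def
    have hq0 : 0 ≤ q := div_nonneg (by linarith) hba.le
    have hq1 : q ≤ 1 := by
      rw [hq_def, div_le_one hba]; linarith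
    -- pointwise convexity bound
    have hptwise : ∀ x, Real.exp (l * d x) ≤
        (b - d x) / (b - a) * Real.exp (l * a) + (d x - a) / (b - a) * Real.exp (l * b) := by
      intro x
      have h1 := (habd x).1; have h2 := (habd x).2
      have hw1 : (0:ℝ) ≤ (b - d x) / (b - a) := div_nonneg (by linarith) hba.le
      have hw2 : (0:ℝ) ≤ (d x - a) / (b - a) := div_nonneg (by linarith) hba.le
      have hsum : (b - d x) / (b - a) + (d x - a) / (b - a) = 1 := by
        field_simp
        ring
      have := convexOn_exp.2 (Set.mem_univ (l * a)) (Set.mem_univ (l * b)) hw1 hw2 hsum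
      simp only [smul_eq_mul] at this
      refine (congrArg Real.exp ?_).trans_le this
      field_simp
      ring
    have hint : ∫ x, Real.exp (l * d x) ∂μ ≤
        (b * Real.exp (l * a) - a * Real.exp (l * b)) / (b - a) := by
      have hInt2 : Integrable (fun x => (b - d x) / (b - a) * Real.exp (l * a) +
          (d x - a) / (b - a) * Real.exp (l * b)) μ := by
        apply Integrable.add
        · exact ((((integrable_const b).sub hdint).div_const (b - a)).mul_const _)
        · exact (((hdint.sub (integrable_const a)).div_const (b - a)).mul_const _)
      have hInt1 : Integrable (fun x => Real.exp (l * d x)) μ := by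
        apply integrable_of_abs_le μ ((hd.const_mul l).exp.aestronglyMeasurable)
          (Real.exp (|l| * max |a| |b|))
        intro x
        rw [abs_of_pos (Real.exp_pos _), Real.exp_le_exp]
        calc l * d x ≤ |l * d x| := le_abs_self _
          _ = |l| * |d x| := abs_mul _ _
          _ ≤ |l| * max |a| |b| := by
              apply mul_le_mul_of_nonneg_left _ (abs_nonneg l)
              rw [abs_le]
              constructor
              · calc -(max |a| |b|) ≤ -|a| := by simp
                  _ ≤ a := neg_abs_le a
                  _ ≤ d x := (habd x).1
              · calc d x ≤ b := (habd x).2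
                  _ ≤ |b| := le_abs_self b
                  _ ≤ max |a| |b| := le_max_right _ _
      calc ∫ x, Real.exp (l * d x) ∂μ
          ≤ ∫ x, ((b - d x) / (b - a) * Real.exp (l * a) +
              (d x - a) / (b - a) * Real.exp (l * b)) ∂μ :=
            integral_mono hInt1 hInt2 hptwise
        _ = (b * Real.exp (l * a) - a * Real.exp (l * b)) / (b - a) := by
            have hfg : (fun x => (b - d x) / (b - a) * Real.exp (l * a) +
                (d x - a) / (b - a) * Real.exp (l * b)) =
                (fun x => (b * Real.exp (l * a) - a * Real.exp (l * b)) / (b - a) +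
                  ((Real.exp (l * b) - Real.exp (l * a)) / (b - a)) * d x) := by
              funext x
              field_simp
              ring
            rw [hfg, integral_add (integrable_const _) (hdint.const_mul _),
              integral_const_mul, hmean, integral_const]
            simp
    refine le_trans hint ?_
    -- algebraic step
    set hh : ℝ := l * (b - a) with hh_def
    have hexp : Real.exp (l * b) = Real.exp (l * a) * Real.exp hh := by
      rw [← Real.exp_add]; congr 1; ring
    have hpos : (0:ℝ) < 1 - q + q * Real.exp hh := by
      rcases eq_or_lt_of_le hq0 with h0 | h0
      · simp [← h0]
      · have := mul_pos h0 (Real.exp_pos hh); linarith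
    have heq2 : (b * Real.exp (l * a) - a * Real.exp (l * b)) / (b - a) =
        Real.exp (l * a) * (1 - q + q * Real.exp hh) := by
      rw [hexp, hq_def]
      field_simp
      ring
    rw [heq2]
    have hlog := hoeffding_core hq0 hq1 (h := hh)
    calc Real.exp (l * a) * (1 - q + q * Real.exp hh)
        = Real.exp (l * a + Real.log (1 - q + q * Real.exp hh)) := by
          rw [Real.exp_add, Real.exp_log hpos]
      _ ≤ Real.exp (l * a + (q * hh + hh ^ 2 / 8)) := by
          rw [Real.exp_le_exp]; linarith
      _ = Real.exp (l ^ 2 * (b - a) ^ 2 / 8) := by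
          congr 1
          have : l * a + q * hh = 0 := by
            rw [hq_def, hh_def]; field_simp; ring
          rw [show l * a + (q * hh + hh ^ 2 / 8) = (l * a + q * hh) + hh ^ 2 / 8 by ring, this,
            zero_add, hh_def]
          ring

section McDiarmid

variable {E : Type*} [MeasurableSpace E]

/-- global boundedness from bounded differences -/
lemma bdd_diff_global {n : ℕ} {c₁ : ℝ} (f : (Fin n → E) → ℝ)
    (hbd : ∀ (i : Fin n) (z z' : Fin n → E), (∀ j, j ≠ i → z j = z' j) → f z - f z' ≤ c₁)
    (z z' : Fin n → E) : f z - f z' ≤ n * c₁ := by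
  classical
  have key : ∀ s : Finset (Fin n), f z - f (s.piecewise z' z) ≤ s.card * c₁ := by
    intro s
    induction s using Finset.induction_on with
    | empty => simp
    | @insert a s' ha ih =>
      rw [Finset.piecewise_insert]
      have h1 : f (s'.piecewise z' z) - f (Function.update (s'.piecewise z' z) a (z' a)) ≤ c₁ := by
        apply hbd a
        intro j hj
        rw [Function.update_of_ne hj]
      have h2 := ih
      rw [Finset.card_insert_of_notMem ha]
      push_cast
      linarith
  have := key Finset.univ
  rwa [Finset.piecewise_univ, Finset.card_univ, Fintype.card_fin] at this

lemma abs_bdd_diff_global {n : ℕ} {c₁ : ℝ} (f : (Fin n → E) → ℝ)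
    (hbd : ∀ (i : Fin n) (z z' : Fin n → E), (∀ j, j ≠ i → z j = z' j) → f z - f z' ≤ c₁)
    (z z' : Fin n → E) : |f z - f z'| ≤ n * c₁ := by
  rw [abs_le]
  constructor
  · have := bdd_diff_global f hbd z' z; linarith
  · exact bdd_diff_global f hbd z z'

/-- McDiarmid mgf bound over a finite product of probability measures. -/
lemma mcdiarmid_mgf (ν : Measure E) [IsProbabilityMeasure ν] [Nonempty E] {c₁ : ℝ} (hc₁ : 0 ≤ c₁) :
    ∀ (n : ℕ) (f : (Fin n → E) → ℝ), Measurable f →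
    (∀ (i : Fin n) (z z' : Fin n → E), (∀ j, j ≠ i → z j = z' j) → f z - f z' ≤ c₁) →
    ∀ l : ℝ, ∫ z, Real.exp (l * (f z - ∫ w, f w ∂(Measure.pi fun _ : Fin n => ν)))
        ∂(Measure.pi fun _ : Fin n => ν) ≤ Real.exp (l ^ 2 * n * c₁ ^ 2 / 8) := by
  intro n
  induction n with
  | zero =>
    intro f hf hbd l
    have huniq : ∀ z : Fin 0 → E, z = (fun i => i.elim0) := fun z => funext (fun i => i.elim0)
    have h1 : ∫ w, f w ∂(Measure.pi fun _ : Fin 0 => ν) = f (fun i => i.elim0) := by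
      rw [show f = (fun _ => f (fun i => i.elim0)) from funext (fun z => by rw [huniq z])]
      simp
    simp only [h1]
    have : ∀ z : Fin 0 → E, Real.exp (l * (f z - f (fun i => i.elim0))) = 1 := by
      intro z; rw [huniq z]; simp
    simp only [this]
    simp
  | succ n ih =>
    intro f hf hbd l
    -- abbreviations
    set pm : Measure (Fin n → E) := Measure.pi fun _ : Fin n => ν with hpm_def
    set Pm : Measure (Fin (n+1) → E) := Measure.pi fun _ : Fin (n+1) => ν with hPm_def
    set e := MeasurableEquiv.piFinSuccAbove (fun _ : Fin (n+1) => E) 0 with he_def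
    have hMP : MeasurePreserving e Pm (ν.prod pm) := by
      have := measurePreserving_piFinSuccAbove (fun _ : Fin (n+1) => ν) 0
      exact this
    set F : E × (Fin n → E) → ℝ := fun y => f (e.symm y) with hF_def
    have hFmeas : Measurable F := hf.comp e.symm.measurable
    -- boundedness of f
    obtain ⟨z₀⟩ : Nonempty (Fin (n+1) → E) := ⟨fun _ => Classical.arbitrary E⟩
    set B : ℝ := |f z₀| + (n+1) * c₁ with hB_def
    have hfB : ∀ z, |f z| ≤ B := by
      intro z
      have := abs_bdd_diff_global f hbd z z₀
      have h2 : |f z| ≤ |f z₀| + |f z - f z₀| := by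
        calc |f z| = |f z₀ + (f z - f z₀)| := by ring_nf
          _ ≤ |f z₀| + |f z - f z₀| := abs_add_le _ _
      rw [hB_def]; push_cast at this ⊢; linarith
    have hFB : ∀ y, |F y| ≤ B := fun y => hfB _
    -- key one-coordinate facts about e.symm
    have hsymm_eq : ∀ (x x' : E) (r : Fin n → E), ∀ j, j ≠ 0 → e.symm (x, r) j = e.symm (x', r) j := by
      intro x x' r j hj
      obtain ⟨k, rfl⟩ := Fin.exists_succAbove_eq hj
      simp only [he_def, MeasurableEquiv.piFinSuccAbove_symm_apply, Fin.insertNthEquiv_apply,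
        Fin.insertNth_apply_succAbove]
    have hsymm_eq2 : ∀ (x : E) (r r' : Fin n → E) (i : Fin n), (∀ j, j ≠ i → r j = r' j) →
        ∀ j, j ≠ (0 : Fin (n+1)).succAbove i → e.symm (x, r) j = e.symm (x, r') j := by
      intro x r r' i hag j hj
      rcases eq_or_ne j 0 with rfl | hj0
      · simp only [he_def, MeasurableEquiv.piFinSuccAbove_symm_apply, Fin.insertNthEquiv_apply, Fin.insertNth_apply_same]
      · obtain ⟨k, rfl⟩ := Fin.exists_succAbove_eq hj0
        simp only [he_def, MeasurableEquiv.piFinSuccAbove_symm_apply, Fin.insertNthEquiv_apply,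
          Fin.insertNth_apply_succAbove]
        exact hag k (fun hk => hj (by rw [hk]))
    -- mean
    set M : ℝ := ∫ w, f w ∂Pm with hM_def
    have hFint : Integrable F (ν.prod pm) :=
      integrable_of_abs_le _ hFmeas.aestronglyMeasurable B hFB
    have hMF : M = ∫ y, F y ∂(ν.prod pm) := by
      rw [hM_def, ← hMP.integral_comp e.measurableEmbedding]
      congr 1
      funext z
      rw [hF_def]
      simp
    -- g
    set g : (Fin n → E) → ℝ := fun r => ∫ x, F (x, r) ∂ν with hg_def
    have hgmeas : Measurable g := by
      have : StronglyMeasurable F := hFmeas.stronglyMeasurable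
      exact this.integral_prod_left'.measurable
    have hcompmeas : ∀ r : Fin n → E, Measurable (fun x => F (x, r)) := fun r =>
      hFmeas.comp (measurable_id.prodMk measurable_const)
    have hgB : ∀ r, |g r| ≤ B := by
      intro r
      have hint1 : Integrable (fun x => F (x, r)) ν := integrable_of_abs_le _
        (hcompmeas r).aestronglyMeasurable B (fun x => hFB _)
      calc |g r| ≤ ∫ x, |F (x, r)| ∂ν := by
            simpa [Real.norm_eq_abs] using norm_integral_le_integral_norm (fun x => F (x, r)) (μ := ν)
        _ ≤ ∫ _x, B ∂ν := integral_mono hint1.abs (integrable_const B) (fun x => hFB _)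
        _ = B := by simp
    have hgbd : ∀ (i : Fin n) (r r' : Fin n → E), (∀ j, j ≠ i → r j = r' j) → g r - g r' ≤ c₁ := by
      intro i r r' hag
      have hint1 : Integrable (fun x => F (x, r)) ν := integrable_of_abs_le _
        ((hFmeas.comp (measurable_id.prodMk measurable_const)).aestronglyMeasurable) B (fun x => hFB _)
      have hint2 : Integrable (fun x => F (x, r')) ν := integrable_of_abs_le _
        ((hFmeas.comp (measurable_id.prodMk measurable_const)).aestronglyMeasurable) B (fun x => hFB _)
      rw [hg_def, ← integral_sub hint1 hint2]
      calc ∫ x, (F (x, r) - F (x, r')) ∂ν ≤ ∫ _x, c₁ ∂ν := by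
            apply integral_mono (hint1.sub hint2) (integrable_const c₁)
            intro x
            exact hbd _ _ _ (hsymm_eq2 x r r' i hag)
        _ = c₁ := by simp
    have hgmean : ∫ r, g r ∂pm = M := by
      rw [hMF, integral_prod_symm F hFint]
    -- main chain
    have hstep1 : ∫ z, Real.exp (l * (f z - M)) ∂Pm = ∫ y, Real.exp (l * (F y - M)) ∂(ν.prod pm) := by
      rw [← hMP.integral_comp e.measurableEmbedding]
      congr 1
      funext z
      rw [hF_def]
      simp
    have hexpint : Integrable (fun y => Real.exp (l * (F y - M))) (ν.prod pm) := by
      apply integrable_of_abs_le _ (((hFmeas.sub measurable_const).const_mul l).exp.aestronglyMeasurable)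
        (Real.exp (|l| * (B + |M|)))
      intro y
      rw [abs_of_pos (Real.exp_pos _), Real.exp_le_exp]
      calc l * (F y - M) ≤ |l * (F y - M)| := le_abs_self _
        _ = |l| * |F y - M| := abs_mul _ _
        _ ≤ |l| * (B + |M|) := mul_le_mul_of_nonneg_left
            (le_trans (abs_sub _ _) (add_le_add (hFB y) le_rfl)) (abs_nonneg l)
    have hstep2 : ∫ y, Real.exp (l * (F y - M)) ∂(ν.prod pm)
        = ∫ r, ∫ x, Real.exp (l * (F (x, r) - M)) ∂ν ∂pm := integral_prod_symm _ hexpint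
    -- inner bound
    have hinner : ∀ r, ∫ x, Real.exp (l * (F (x, r) - M)) ∂ν ≤
        Real.exp (l ^ 2 * c₁ ^ 2 / 8) * Real.exp (l * (g r - M)) := by
      intro r
      set d : E → ℝ := fun x => F (x, r) - g r with hd_def
      have hdmeas : Measurable d := (hFmeas.comp (measurable_id.prodMk measurable_const)).sub
        measurable_const
      have hdint : Integrable (fun x => F (x, r)) ν := integrable_of_abs_le _
        ((hFmeas.comp (measurable_id.prodMk measurable_const)).aestronglyMeasurable) B (fun x => hFB _)
      have hdmean : ∫ x, d x ∂ν = 0 := by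
        rw [hd_def]
        rw [integral_sub hdint (integrable_const _), integral_const]
        simp [hg_def]
      have hbdd : BddBelow (Set.range d) := by
        obtain ⟨x₁⟩ : Nonempty E := inferInstance
        refine ⟨d x₁ - c₁, ?_⟩
        rintro y ⟨x, rfl⟩
        have : F (x₁, r) - F (x, r) ≤ c₁ := hbd 0 _ _ (hsymm_eq x₁ x r)
        simp only [hd_def]
        linarith
      set a : ℝ := ⨅ x, d x with ha_def
      have hdab : ∀ x, d x ∈ Set.Icc a (a + c₁) := by
        intro x
        constructor
        · exact ciInf_le hbdd x
        · rw [ha_def]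
          have : d x - c₁ ≤ ⨅ x', d x' := by
            apply le_ciInf
            intro x'
            have : F (x, r) - F (x', r) ≤ c₁ := hbd 0 _ _ (hsymm_eq x x' r)
            simp only [hd_def]
            linarith
          linarith
      have := hoeffding_mgf ν hdmeas hdab hdmean l
      have heq : ∀ x, Real.exp (l * (F (x, r) - M)) = Real.exp (l * d x) * Real.exp (l * (g r - M)) := by
        intro x
        rw [← Real.exp_add, hd_def]
        congr 1
        ring
      calc ∫ x, Real.exp (l * (F (x, r) - M)) ∂ν
          = (∫ x, Real.exp (l * d x) ∂ν) * Real.exp (l * (g r - M)) := by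
            simp only [heq]
            rw [integral_mul_const]
        _ ≤ Real.exp (l ^ 2 * (a + c₁ - a) ^ 2 / 8) * Real.exp (l * (g r - M)) := by
            apply mul_le_mul_of_nonneg_right this (Real.exp_pos _).le
        _ = Real.exp (l ^ 2 * c₁ ^ 2 / 8) * Real.exp (l * (g r - M)) := by ring_nf
    -- outer bound
    have houter : ∫ r, ∫ x, Real.exp (l * (F (x, r) - M)) ∂ν ∂pm ≤
        ∫ r, Real.exp (l ^ 2 * c₁ ^ 2 / 8) * Real.exp (l * (g r - M)) ∂pm := by
      apply integral_mono_of_nonneg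
      · exact ae_of_all _ (fun r => integral_nonneg (fun x => (Real.exp_pos _).le))
      · apply Integrable.const_mul
        apply integrable_of_abs_le _ (((hgmeas.sub measurable_const).const_mul l).exp.aestronglyMeasurable)
          (Real.exp (|l| * (B + |M|)))
        intro r
        rw [abs_of_pos (Real.exp_pos _), Real.exp_le_exp]
        calc l * (g r - M) ≤ |l * (g r - M)| := le_abs_self _
          _ = |l| * |g r - M| := abs_mul _ _
          _ ≤ |l| * (B + |M|) := mul_le_mul_of_nonneg_left
              (le_trans (abs_sub _ _) (add_le_add (hgB r) le_rfl)) (abs_nonneg l)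
      · exact ae_of_all _ hinner
    have hIH := ih g hgmeas hgbd l
    rw [hgmean] at hIH
    calc ∫ z, Real.exp (l * (f z - M)) ∂Pm
        = ∫ r, ∫ x, Real.exp (l * (F (x, r) - M)) ∂ν ∂pm := by rw [hstep1, hstep2]
      _ ≤ ∫ r, Real.exp (l ^ 2 * c₁ ^ 2 / 8) * Real.exp (l * (g r - M)) ∂pm := houter
      _ = Real.exp (l ^ 2 * c₁ ^ 2 / 8) * ∫ r, Real.exp (l * (g r - M)) ∂pm := integral_const_mul _ _
      _ ≤ Real.exp (l ^ 2 * c₁ ^ 2 / 8) * Real.exp (l ^ 2 * n * c₁ ^ 2 / 8) := by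
          apply mul_le_mul_of_nonneg_left hIH (Real.exp_pos _).le
      _ = Real.exp (l ^ 2 * ((n : ℝ) + 1) * c₁ ^ 2 / 8) := by
          rw [← Real.exp_add]
          congr 1
          ring
      _ = Real.exp (l ^ 2 * ((n + 1 : ℕ) : ℝ) * c₁ ^ 2 / 8) := by push_cast; ring_nf

end McDiarmid

/-- McDiarmid tail bound. -/
lemma mcdiarmid_tail {E : Type*} [MeasurableSpace E] (ν : Measure E) [IsProbabilityMeasure ν]
    [Nonempty E] {c₁ : ℝ} (hc₁ : 0 < c₁) {n : ℕ} (hn : 0 < n) (f : (Fin n → E) → ℝ)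
    (hf : Measurable f)
    (hbd : ∀ (i : Fin n) (z z' : Fin n → E), (∀ j, j ≠ i → z j = z' j) → f z - f z' ≤ c₁)
    {M : ℝ} (hM : ∫ w, f w ∂(Measure.pi fun _ : Fin n => ν) = M) {s : ℝ} (hs : 0 ≤ s) :
    (Measure.pi fun _ : Fin n => ν) {z | s ≤ f z - M} ≤
      ENNReal.ofReal (Real.exp (-2 * s ^ 2 / (n * c₁ ^ 2))) := by
  set pm : Measure (Fin n → E) := Measure.pi fun _ : Fin n => ν with hpm_def
  set l : ℝ := 4 * s / (n * c₁ ^ 2) with hl_def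
  have hnc : (0:ℝ) < n * c₁ ^ 2 := by positivity
  have hl0 : 0 ≤ l := by positivity
  -- boundedness for integrability
  obtain ⟨z₀⟩ : Nonempty (Fin n → E) := ⟨fun _ => Classical.arbitrary E⟩
  have hfB : ∀ z, |f z - M| ≤ |f z₀ - M| + n * c₁ := by
    intro z
    have h1 := abs_bdd_diff_global f hbd z z₀
    calc |f z - M| = |(f z₀ - M) + (f z - f z₀)| := by ring_nf
      _ ≤ |f z₀ - M| + |f z - f z₀| := abs_add_le _ _
      _ ≤ |f z₀ - M| + n * c₁ := by linarith
  have hint : Integrable (fun z => Real.exp (l * (f z - M))) pm := by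
    apply integrable_of_abs_le _ (((hf.sub measurable_const).const_mul l).exp.aestronglyMeasurable)
      (Real.exp (l * (|f z₀ - M| + n * c₁)))
    intro z
    rw [abs_of_pos (Real.exp_pos _), Real.exp_le_exp]
    calc l * (f z - M) ≤ l * |f z - M| := by
          apply mul_le_mul_of_nonneg_left (le_abs_self _) hl0
      _ ≤ l * (|f z₀ - M| + n * c₁) := mul_le_mul_of_nonneg_left (hfB z) hl0
  have hmgf : mgf (fun z => f z - M) pm l ≤ Real.exp (l ^ 2 * n * c₁ ^ 2 / 8) := by
    have := mcdiarmid_mgf ν hc₁.le n f hf hbd l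
    rw [hM] at this
    exact this
  have hcher := measure_ge_le_exp_mul_mgf (X := fun z => f z - M) (μ := pm) s hl0 hint
  have hkey : (pm {z | s ≤ f z - M}).toReal ≤ Real.exp (-2 * s ^ 2 / (n * c₁ ^ 2)) := by
    calc (pm {z | s ≤ f z - M}).toReal ≤ Real.exp (-l * s) * mgf (fun z => f z - M) pm l := hcher
      _ ≤ Real.exp (-l * s) * Real.exp (l ^ 2 * n * c₁ ^ 2 / 8) :=
          mul_le_mul_of_nonneg_left hmgf (Real.exp_pos _).le
      _ = Real.exp (-l * s + l ^ 2 * n * c₁ ^ 2 / 8) := (Real.exp_add _ _).symm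
      _ = Real.exp (-2 * s ^ 2 / (n * c₁ ^ 2)) := by
          congr 1
          rw [hl_def]
          field_simp
          ring
  rw [← ENNReal.le_ofReal_iff_toReal_le (measure_ne_top pm _) (Real.exp_pos _).le] at hkey
  exact hkey

section Law

variable {Ω : Type*} [MeasureSpace Ω] [IsProbabilityMeasure (ℙ : Measure Ω)]
variable {E : Type*} [MeasurableSpace E] (ν : Measure E) [IsProbabilityMeasure ν]

/-- joint law of iid variables is the product measure -/
lemma joint_law_pi {n : ℕ} (W : Fin n → Ω → E) (hW : ∀ i, Measurable (W i))
    (hind : iIndepFun W ℙ)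
    (hid : ∀ i, Measure.map (W i) ℙ = ν) :
    Measure.map (fun ω k => W k ω) ℙ = Measure.pi (fun _ : Fin n => ν) := by
  have hWmeas : Measurable (fun ω (k : Fin n) => W k ω) :=
    measurable_pi_iff.2 hW
  refine (Measure.pi_eq fun s hs => ?_).symm
  rw [Measure.map_apply hWmeas (MeasurableSet.univ_pi hs)]
  have hpre : (fun ω (k : Fin n) => W k ω) ⁻¹' (Set.univ.pi s) = ⋂ k, (W k) ⁻¹' (s k) := by
    ext ω
    simp [Set.mem_univ_pi, Set.mem_iInter]
  rw [hpre]
  have := (iIndepFun_iff_measure_inter_preimage_eq_mul.1 hind) Finset.univ (sets := s)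
    (fun i _ => hs i)
  rw [show (⋂ k, (W k) ⁻¹' (s k)) = ⋂ k ∈ Finset.univ, (W k) ⁻¹' (s k) by simp]
  rw [this]
  apply Finset.prod_congr rfl
  intro i _
  rw [← hid i, Measure.map_apply (hW i) (hs i)]

/-- marginal: dropping coordinate 0 -/
lemma joint_law_pi_succ {n : ℕ} (W : Fin (n+1) → Ω → E) (hW : ∀ i, Measurable (W i))
    (hind : iIndepFun W ℙ)
    (hid : ∀ i, Measure.map (W i) ℙ = ν) :
    Measure.map (fun ω (k : Fin n) => W k.succ ω) ℙ = Measure.pi (fun _ : Fin n => ν) := by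
  have hWmeas : Measurable (fun ω (k : Fin (n+1)) => W k ω) := measurable_pi_iff.2 hW
  have hproj : Measurable (fun (v : Fin (n+1) → E) (k : Fin n) => v k.succ) :=
    measurable_pi_iff.2 (fun k => measurable_pi_apply _)
  have hcomp : (fun ω (k : Fin n) => W k.succ ω) =
      (fun (v : Fin (n+1) → E) (k : Fin n) => v k.succ) ∘ (fun ω k => W k ω) := rfl
  rw [hcomp, ← Measure.map_map hproj hWmeas, joint_law_pi ν W hW hind hid]
  refine (Measure.pi_eq fun s hs => ?_).symm
  rw [Measure.map_apply hproj (MeasurableSet.univ_pi hs)]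
  have hpre : (fun (v : Fin (n+1) → E) (k : Fin n) => v k.succ) ⁻¹' (Set.univ.pi s) =
      Set.univ.pi (Fin.cases Set.univ s) := by
    ext v
    simp only [Set.mem_preimage, Set.mem_univ_pi]
    constructor
    · intro h i
      induction i using Fin.cases with
      | zero => simp
      | succ k => exact h k
    · intro h k
      exact h k.succ
  rw [hpre, Measure.pi_pi]
  rw [Fin.prod_univ_succ]
  simp

end Law

lemma card_filter_val_lt (n t : ℕ) (ht : t ≤ n) :
    (Finset.univ.filter (fun j : Fin n => (j : ℕ) < t)).card = t := by
  classical
  have : Finset.univ.filter (fun j : Fin n => (j : ℕ) < t) =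
      Finset.map (Fin.castLEEmb ht) Finset.univ := by
    ext j
    simp only [Finset.mem_filter, Finset.mem_univ, true_and, Finset.mem_map]
    constructor
    · intro hj
      exact ⟨⟨(j : ℕ), hj⟩, by ext; simp⟩
    · rintro ⟨i, rfl⟩
      simp [Fin.castLEEmb, i.isLt]
  rw [this, Finset.card_map, Finset.card_univ, Fintype.card_fin]

lemma kthSmallest_le {n : ℕ} (f : Fin n → ℝ) (k : ℕ) (hk1 : 1 ≤ k) (hkn : k ≤ n) (v : ℝ)
    (h : k ≤ (Finset.univ.filter (fun i => f i ≤ v)).card) :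
    kthSmallest f k ≤ (v : EReal) := by
  classical
  rw [kthSmallest, dif_pos ⟨hk1, hkn⟩, EReal.coe_le_coe_iff]
  by_contra hcon
  push_neg at hcon
  -- v < f (sort f ⟨k-1⟩); every i with f i ≤ v has sort-rank < k-1
  set σ := Tuple.sort f with hσ
  have hmono := Tuple.monotone_sort f
  have hsub : Finset.univ.filter (fun i => f i ≤ v) ⊆
      Finset.image σ (Finset.univ.filter (fun j : Fin n => (j : ℕ) < k - 1)) := by
    intro i hi
    simp only [Finset.mem_filter, Finset.mem_univ, true_and] at hi
    rw [Finset.mem_image]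
    refine ⟨σ.symm i, ?_, by simp⟩
    simp only [Finset.mem_filter, Finset.mem_univ, true_and]
    by_contra hge
    push_neg at hge
    have h1 : (⟨k - 1, by omega⟩ : Fin n) ≤ σ.symm i := by
      rw [Fin.le_def]; exact hge
    have h2 := hmono h1
    simp only [Function.comp_apply, ← hσ, Equiv.apply_symm_apply] at h2
    exact absurd (le_trans h2 hi) (not_le.2 hcon)
  have hcard := Finset.card_le_card hsub
  rw [Finset.card_image_of_injective _ σ.injective, card_filter_val_lt n (k-1) (by omega)] at hcard
  omega

lemma le_kthSmallest {n : ℕ} (f : Fin n → ℝ) (k : ℕ) (hk1 : 1 ≤ k) (hkn : k ≤ n) (v : ℝ)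
    (h : (Finset.univ.filter (fun i => f i < v)).card ≤ k - 1) :
    (v : EReal) ≤ kthSmallest f k := by
  classical
  rw [kthSmallest, dif_pos ⟨hk1, hkn⟩, EReal.coe_le_coe_iff]
  by_contra hcon
  push_neg at hcon
  set σ := Tuple.sort f with hσ
  have hmono := Tuple.monotone_sort f
  have hsub : Finset.image σ (Finset.univ.filter (fun j : Fin n => (j : ℕ) < k)) ⊆
      Finset.univ.filter (fun i => f i < v) := by
    intro i hi
    rw [Finset.mem_image] at hi
    obtain ⟨j, hj, rfl⟩ := hi
    simp only [Finset.mem_filter, Finset.mem_univ, true_and] at hj ⊢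
    have h1 : j ≤ (⟨k - 1, by omega⟩ : Fin n) := by
      rw [Fin.le_def]; simp; omega
    have h2 := hmono h1
    simp only [Function.comp_apply] at h2
    exact lt_of_le_of_lt h2 hcon
  have hcard := Finset.card_le_card hsub
  rw [Finset.card_image_of_injective _ σ.injective, card_filter_val_lt n k hkn] at hcard
  omega

/-- leave-one-out training sets give `c`-close predictors, via symmetry + one-point stability -/
lemma loo_stab {γ : Type*} {V : Type*} [SeminormedAddCommGroup V] {m : ℕ} {c : ℝ} (hc : 0 ≤ c)
    (g : (Fin m → γ) → V)
    (hsym : ∀ (σ : Equiv.Perm (Fin m)) (z : Fin m → γ), g (z ∘ σ) = g z)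
    (hstab : ∀ (i : Fin m) (z z' : Fin m → γ), (∀ j, j ≠ i → z j = z' j) →
      ‖g z - g z'‖ ≤ c)
    (z : Fin (m+1) → γ) (i : Fin (m+1)) :
    ‖g (fun k => z (i.succAbove k)) - g (fun k => z k.succ)‖ ≤ c := by
  rcases eq_or_ne i 0 with rfl | hi0
  · simp only [Fin.succAbove_zero]
    simpa using hc
  · -- m must be positive
    rcases m with - | m'
    · exact absurd (Fin.fin_one_eq_zero i) hi0
    obtain ⟨j, rfl⟩ : ∃ j : Fin (m'+1), j.succ = i := by
      obtain ⟨j, hj⟩ := Fin.exists_succ_eq.2 hi0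
      exact ⟨j, hj⟩
    set σ : Equiv.Perm (Fin (m'+1)) := j.cycleRange with hσ
    set z₁ : Fin (m'+1) → γ := fun k => z ((j.succ).succAbove k) with hz₁
    set z₀ : Fin (m'+1) → γ := fun k => z k.succ with hz₀
    have hkey : ∀ k : Fin (m'+1), k ≠ j → (z₁ ∘ σ) k = z₀ k := by
      intro k hk
      have : (j.succ).succAbove (σ k) = k.succ := by
        rcases lt_or_gt_of_ne hk with hlt | hgt
        · -- k < j : σ k = k + 1 (as value), which is < j+1, so succAbove acts as castSucc
          have h1 : (σ k : ℕ) = (k : ℕ) + 1 := Fin.coe_cycleRange_of_lt hlt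
          have h2 : (σ k).castSucc < j.succ := by
            rw [Fin.lt_def]
            simp only [Fin.coe_castSucc, h1, Fin.val_succ]
            omega
          rw [Fin.succAbove_of_castSucc_lt _ _ h2]
          ext
          simp [h1]
        · -- j < k : σ k = k, and j.succ ≤ castSucc k, so succAbove acts as succ
          have h1 : σ k = k := Fin.cycleRange_of_gt hgt
          rw [h1, Fin.succAbove_of_le_castSucc]
          rw [Fin.le_def]
          simp only [Fin.val_succ, Fin.coe_castSucc]
          omega
      simp only [Function.comp_apply, hz₁, hz₀, this]
    calc ‖g z₁ - g z₀‖ = ‖g (z₁ ∘ σ) - g z₀‖ := by rw [hsym σ z₁]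
      _ ≤ c := hstab j _ _ hkey

end Helpers

set_option maxHeartbeats 3200000 in
/-- Theorem 1 (training-conditional coverage for jackknife+).  The dataset has
`m + 1` i.i.d. points with common law `ν`; `T` trains on `m` points, and `c`
plays the role of `c_{n−1}`, `L` of `L_{n−1}`, with `n = m + 1`.  The
conditional miscoverage of the jackknife+ interval built from the
leave-one-out fits `μ_{β̂₋ᵢ}` satisfies
`P(P_e > α + √(log(2/δ)/(2n)) + 2 L κ₂ c (1/κ₁ + √((n/(2κ₁²)) log(2p/ε)))) ≤ ε + δ`. -/
theorem stmt9 {Ω : Type*} [MeasureSpace Ω] [IsProbabilityMeasure (ℙ : Measure Ω)]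
    {X : Type*} [MeasurableSpace X] [TopologicalSpace X] [BorelSpace X]
    (ν : Measure (X × ℝ)) [IsProbabilityMeasure ν]
    (m p : ℕ) (hp : 0 < p)
    (α c κ₁ κ₂ L : ℝ) (hα : 0 < α) (hα1 : α < 1) (hc : 0 < c)
    (hκ₁ : 0 < κ₁) (hκ₂ : 0 < κ₂) (hL : 0 ≤ L)
    (μ : (Fin p → ℝ) → (X →ᵇ ℝ))
    (hμmeas : Measurable fun q : (Fin p → ℝ) × X => μ q.1 q.2)
    (T : (Fin m → (X × ℝ)) → (Fin p → ℝ)) (hT : Measurable T)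
    (hsym : ∀ (σ : Equiv.Perm (Fin m)) (z : Fin m → X × ℝ), T (z ∘ σ) = T z)
    (hstab : ∀ (i : Fin m) (z z' : Fin m → X × ℝ), (∀ j, j ≠ i → z j = z' j) →
      ‖μ (T z) - μ (T z')‖ ≤ c)
    (hbilip : ∀ β β' : Fin p → ℝ,
      κ₁ * ‖β - β'‖ ≤ ‖μ β - μ β'‖ ∧ ‖μ β - μ β'‖ ≤ κ₂ * ‖β - β'‖)
    (Zs : Fin (m + 1) → Ω → X × ℝ) (hmeas : ∀ i, Measurable (Zs i))
    (hindep : iIndepFun Zs ℙ)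
    (hident : ∀ i, Measure.map (Zs i) ℙ = ν)
    (βbar : Fin p → ℝ)
    (hβbar : βbar = fun j => ∫ ω, T (fun k => Zs ((0 : Fin (m + 1)).succAbove k) ω) j ∂ℙ)
    (hdens : ∀ t t' : ℝ, t ≤ t' →
      (ν {z : X × ℝ | |z.2 - μ βbar z.1| ≤ t'}).toReal -
        (ν {z : X × ℝ | |z.2 - μ βbar z.1| ≤ t}).toReal ≤ L * (t' - t))
    (ε δ : ℝ) (hε : 0 < ε) (hδ : 0 < δ) :
    (ℙ {ω | α + Real.sqrt (Real.log (2 / δ) / (2 * (m + 1)))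
        + 2 * L * κ₂ * c *
            (1 / κ₁ + Real.sqrt (((m + 1) / (2 * κ₁ ^ 2)) * Real.log (2 * p / ε)))
        < (ν {z : X × ℝ |
            ¬ (kthSmallest (fun i : Fin (m + 1) =>
                  μ (T (fun k => Zs (i.succAbove k) ω)) z.1 -
                    |(Zs i ω).2 - μ (T (fun k => Zs (i.succAbove k) ω)) (Zs i ω).1|)
                  ⌊α * (m + 2)⌋₊ ≤ (z.2 : EReal) ∧
                (z.2 : EReal) ≤ kthSmallest (fun i : Fin (m + 1) =>
                  μ (T (fun k => Zs (i.succAbove k) ω)) z.1 +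
                    |(Zs i ω).2 - μ (T (fun k => Zs (i.succAbove k) ω)) (Zs i ω).1|)
                  ⌈(1 - α) * (m + 2)⌉₊)}).toReal}).toReal ≤ ε + δ := by
  classical
  -- trivial case: ε + δ ≥ 1
  by_cases hεδ : 1 ≤ ε + δ
  · calc (ℙ _).toReal ≤ (ℙ Set.univ).toReal :=
        ENNReal.toReal_mono (measure_ne_top _ _) (measure_mono (Set.subset_univ _))
      _ = 1 := by rw [measure_univ]; simp
      _ ≤ ε + δ := hεδ
  push_neg at hεδ
  have hε1 : ε < 1 := by linarith
  have hδ1 : δ < 1 := by linarith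
  -- basic nonnegativity facts
  have hη0 : 0 ≤ Real.sqrt (Real.log (2 / δ) / (2 * (m + 1))) := Real.sqrt_nonneg _
  set η := Real.sqrt (Real.log (2 / δ) / (2 * (m + 1))) with hη_def
  have hthr3 : 0 ≤ 2 * L * κ₂ * c *
      (1 / κ₁ + Real.sqrt (((m + 1) / (2 * κ₁ ^ 2)) * Real.log (2 * p / ε))) := by
    have h1 : (0:ℝ) ≤ 1 / κ₁ + Real.sqrt (((m + 1) / (2 * κ₁ ^ 2)) * Real.log (2 * p / ε)) := by
      have := Real.sqrt_nonneg (((m + 1 : ℝ) / (2 * κ₁ ^ 2)) * Real.log (2 * p / ε))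
      positivity
    positivity
  -- trivial case: α (m+2) < 1
  by_cases hα2 : α * ((m:ℝ) + 2) < 1
  · have hk₀ : ⌊α * ((m:ℝ) + 2)⌋₊ = 0 := Nat.floor_eq_zero.2 hα2
    have hK : ⌈(1 - α) * ((m:ℝ) + 2)⌉₊ = m + 2 := by
      rw [Nat.ceil_eq_iff (by omega)]
      constructor
      · push_cast
        nlinarith
      · push_cast
        nlinarith
    have hkbot : ∀ f : Fin (m+1) → ℝ, kthSmallest f (⌊α * ((m:ℝ) + 2)⌋₊) = ⊥ := by
      intro f
      rw [hk₀, kthSmallest, dif_neg (by omega), if_pos rfl]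
    have hktop : ∀ f : Fin (m+1) → ℝ, kthSmallest f (⌈(1 - α) * ((m:ℝ) + 2)⌉₊) = ⊤ := by
      intro f
      rw [hK, kthSmallest, dif_neg (by omega), if_neg (by omega)]
    have hsetempty : {ω : Ω | α + η
        + 2 * L * κ₂ * c *
            (1 / κ₁ + Real.sqrt (((m + 1) / (2 * κ₁ ^ 2)) * Real.log (2 * p / ε)))
        < (ν {z : X × ℝ |
            ¬ (kthSmallest (fun i : Fin (m + 1) =>
                  μ (T (fun k => Zs (i.succAbove k) ω)) z.1 -
                    |(Zs i ω).2 - μ (T (fun k => Zs (i.succAbove k) ω)) (Zs i ω).1|)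
                  ⌊α * (m + 2)⌋₊ ≤ (z.2 : EReal) ∧
                (z.2 : EReal) ≤ kthSmallest (fun i : Fin (m + 1) =>
                  μ (T (fun k => Zs (i.succAbove k) ω)) z.1 +
                    |(Zs i ω).2 - μ (T (fun k => Zs (i.succAbove k) ω)) (Zs i ω).1|)
                  ⌈(1 - α) * (m + 2)⌉₊)}).toReal} = ∅ := by
      apply Set.eq_empty_iff_forall_notMem.2
      intro ω hω
      rw [Set.mem_setOf_eq] at hω
      have hinner : {z : X × ℝ |
            ¬ (kthSmallest (fun i : Fin (m + 1) =>
                  μ (T (fun k => Zs (i.succAbove k) ω)) z.1 -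
                    |(Zs i ω).2 - μ (T (fun k => Zs (i.succAbove k) ω)) (Zs i ω).1|)
                  ⌊α * (m + 2)⌋₊ ≤ (z.2 : EReal) ∧
                (z.2 : EReal) ≤ kthSmallest (fun i : Fin (m + 1) =>
                  μ (T (fun k => Zs (i.succAbove k) ω)) z.1 +
                    |(Zs i ω).2 - μ (T (fun k => Zs (i.succAbove k) ω)) (Zs i ω).1|)
                  ⌈(1 - α) * (m + 2)⌉₊)} = ∅ := by
        apply Set.eq_empty_iff_forall_notMem.2
        intro z hz
        rw [Set.mem_setOf_eq] at hz
        exact hz ⟨by rw [hkbot]; exact bot_le, by rw [hktop]; exact le_top⟩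
      rw [hinner] at hω
      simp only [measure_empty, ENNReal.toReal_zero] at hω
      linarith
    rw [hsetempty]
    simp only [measure_empty, ENNReal.toReal_zero]
    linarith
  push_neg at hα2
  -- abstract the event
  set Ev := {ω : Ω | α + η
        + 2 * L * κ₂ * c *
            (1 / κ₁ + Real.sqrt (((m + 1) / (2 * κ₁ ^ 2)) * Real.log (2 * p / ε)))
        < (ν {z : X × ℝ |
            ¬ (kthSmallest (fun i : Fin (m + 1) =>
                  μ (T (fun k => Zs (i.succAbove k) ω)) z.1 -
                    |(Zs i ω).2 - μ (T (fun k => Zs (i.succAbove k) ω)) (Zs i ω).1|)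
                  ⌊α * (m + 2)⌋₊ ≤ (z.2 : EReal) ∧
                (z.2 : EReal) ≤ kthSmallest (fun i : Fin (m + 1) =>
                  μ (T (fun k => Zs (i.succAbove k) ω)) z.1 +
                    |(Zs i ω).2 - μ (T (fun k => Zs (i.succAbove k) ω)) (Zs i ω).1|)
                  ⌈(1 - α) * (m + 2)⌉₊)}).toReal} with hEv_def
  -- nonemptiness of the sample space type
  haveI hNE : Nonempty (X × ℝ) := by
    by_contra h
    rw [not_nonempty_iff] at h
    have h1 : (ν Set.univ) = 1 := measure_univ
    rw [Set.univ_eq_empty_iff.2 h, measure_empty] at h1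
    exact zero_ne_one h1
  -- score function
  set scr : X × ℝ → ℝ := fun w => |w.2 - μ βbar w.1| with hscr_def
  have hscrmeas : Measurable scr := by
    apply Measurable.abs
    exact measurable_snd.sub ((μ βbar).continuous.measurable.comp measurable_fst)
  have hscr0 : ∀ w, 0 ≤ scr w := fun w => abs_nonneg _
  -- constants
  set c₁ : ℝ := c / κ₁ with hc₁_def
  have hc₁pos : 0 < c₁ := div_pos hc hκ₁
  have hp1 : (1:ℝ) ≤ p := by exact_mod_cast hp
  have hlogp : 0 < Real.log (2 * p / ε) := by
    apply Real.log_pos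
    rw [lt_div_iff₀ hε]
    nlinarith
  have hlogd : 0 ≤ Real.log (2 / δ) := by
    apply Real.log_nonneg
    rw [le_div_iff₀ hδ]; linarith
  set t' : ℝ := c₁ * Real.sqrt (((m:ℝ)+1)/2 * Real.log (2 * p / ε)) with ht'_def
  have ht'pos : 0 < t' := by
    apply mul_pos hc₁pos
    apply Real.sqrt_pos.2
    positivity
  set ε' : ℝ := κ₂ * (c₁ + t') with hε'_def
  have hε'0 : 0 ≤ ε' := by positivity
  have hsq : Real.sqrt ((((m:ℝ) + 1) / (2 * κ₁ ^ 2)) * Real.log (2 * p / ε))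
      = Real.sqrt (((m:ℝ)+1)/2 * Real.log (2 * p / ε)) / κ₁ := by
    rw [show (((m:ℝ) + 1) / (2 * κ₁ ^ 2)) * Real.log (2 * p / ε)
        = (((m:ℝ)+1)/2 * Real.log (2 * p / ε)) / κ₁ ^ 2 by field_simp]
    rw [Real.sqrt_div (by positivity), Real.sqrt_sq hκ₁.le]
  have hthr_eq : 2 * L * κ₂ * c *
      (1 / κ₁ + Real.sqrt ((((m:ℝ) + 1) / (2 * κ₁ ^ 2)) * Real.log (2 * p / ε)))
      = 2 * L * ε' := by
    rw [hsq, hε'_def, ht'_def, hc₁_def]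
    field_simp
  -- second trivial case : α + η ≥ 1
  by_cases hqpos : 1 - α - η ≤ 0
  · have hEvempty : Ev = ∅ := by
      apply Set.eq_empty_iff_forall_notMem.2
      intro ω hω
      rw [hEv_def, Set.mem_setOf_eq] at hω
      have h1 : (ν {z : X × ℝ |
            ¬ (kthSmallest (fun i : Fin (m + 1) =>
                  μ (T (fun k => Zs (i.succAbove k) ω)) z.1 -
                    |(Zs i ω).2 - μ (T (fun k => Zs (i.succAbove k) ω)) (Zs i ω).1|)
                  ⌊α * (m + 2)⌋₊ ≤ (z.2 : EReal) ∧
                (z.2 : EReal) ≤ kthSmallest (fun i : Fin (m + 1) =>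
                  μ (T (fun k => Zs (i.succAbove k) ω)) z.1 +
                    |(Zs i ω).2 - μ (T (fun k => Zs (i.succAbove k) ω)) (Zs i ω).1|)
                  ⌈(1 - α) * (m + 2)⌉₊)}).toReal ≤ 1 := by
        calc (ν _).toReal ≤ (ν Set.univ).toReal :=
            ENNReal.toReal_mono (measure_ne_top _ _) (measure_mono (Set.subset_univ _))
          _ = 1 := by rw [measure_univ]; simp
      linarith
    rw [hEvempty]
    simp only [measure_empty, ENNReal.toReal_zero]
    linarith
  push_neg at hqpos
  set q : ℝ := 1 - α - η with hq_def
  have hqlt1 : q < 1 := by rw [hq_def]; linarith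
  -- CDF of the score
  set Ftr : ℝ → ℝ := fun t => (ν {w : X × ℝ | scr w ≤ t}).toReal with hFtr_def
  have hFmono : Monotone Ftr := by
    intro t t' htt
    exact ENNReal.toReal_mono (measure_ne_top _ _)
      (measure_mono (fun w hw => le_trans hw htt))
  have hFset_meas : ∀ t : ℝ, MeasurableSet {w : X × ℝ | scr w ≤ t} := fun t =>
    measurableSet_le hscrmeas measurable_const
  -- S and tstar
  set S : Set ℝ := {t : ℝ | q ≤ Ftr t} with hS_def
  have hSne : S.Nonempty := by
    by_contra hcon
    rw [Set.not_nonempty_iff_eq_empty] at hcon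
    have hmono : Monotone (fun k : ℕ => {w : X × ℝ | scr w ≤ (k:ℝ)}) := by
      intro i j hij w hw
      simp only [Set.mem_setOf_eq] at hw ⊢
      exact le_trans hw (by exact_mod_cast hij)
    have hunion : (⋃ k : ℕ, {w : X × ℝ | scr w ≤ (k:ℝ)}) = Set.univ := by
      apply Set.eq_univ_iff_forall.2
      intro w
      rw [Set.mem_iUnion]
      exact ⟨⌈scr w⌉₊, by simpa using Nat.le_ceil (scr w)⟩
    have htend := tendsto_measure_iUnion_atTop (μ := ν) hmono
    rw [hunion, measure_univ] at htend
    have hlt : ∀ k : ℕ, ν {w : X × ℝ | scr w ≤ (k:ℝ)} ≤ ENNReal.ofReal q := by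
      intro k
      have : (k:ℝ) ∉ S := by rw [hcon]; exact Set.notMem_empty _
      rw [hS_def, Set.mem_setOf_eq, not_le] at this
      calc ν {w : X × ℝ | scr w ≤ (k:ℝ)}
          = ENNReal.ofReal (Ftr k) := (ENNReal.ofReal_toReal (measure_ne_top _ _)).symm
        _ ≤ ENNReal.ofReal q := ENNReal.ofReal_le_ofReal this.le
    have := le_of_tendsto' htend hlt
    have hq1 : ENNReal.ofReal q < 1 := ENNReal.ofReal_lt_one.2 hqlt1
    exact absurd (lt_of_le_of_lt this hq1) (lt_irrefl _)
  have hSbb : BddBelow S := by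
    refine ⟨0, fun t ht => ?_⟩
    by_contra hneg
    push_neg at hneg
    have hempty : {w : X × ℝ | scr w ≤ t} = ∅ := by
      apply Set.eq_empty_iff_forall_notMem.2
      intro w hw
      exact absurd (le_trans (hscr0 w) hw) (not_le.2 hneg)
    simp only [hS_def, Set.mem_setOf_eq, hFtr_def] at ht
    rw [hempty] at ht
    simp at ht
    linarith
  set tstar : ℝ := sInf S with htstar_def
  -- F(tstar) ≥ q (right continuity)
  have hFtstar : q ≤ Ftr tstar := by
    have hanti : Antitone (fun k : ℕ => {w : X × ℝ | scr w ≤ tstar + 1/((k:ℝ)+1)}) := by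
      intro i j hij w hw
      simp only [Set.mem_setOf_eq] at hw ⊢
      refine le_trans hw ?_
      have h1 : 1/((j:ℝ)+1) ≤ 1/((i:ℝ)+1) := by
        apply one_div_le_one_div_of_le (by positivity)
        exact_mod_cast add_le_add_left (Nat.cast_le.2 hij) 1
      linarith
    have hinter : (⋂ k : ℕ, {w : X × ℝ | scr w ≤ tstar + 1/((k:ℝ)+1)})
        = {w : X × ℝ | scr w ≤ tstar} := by
      ext w
      simp only [Set.mem_iInter, Set.mem_setOf_eq]
      constructor
      · intro h
        by_contra hcon
        push_neg at hcon
        obtain ⟨k, hk⟩ := exists_nat_one_div_lt (show (0:ℝ) < scr w - tstar by linarith)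
        have := h k
        linarith
      · intro h k
        have : (0:ℝ) < 1/((k:ℝ)+1) := by positivity
        linarith
    have htend := tendsto_measure_iInter_atTop (μ := ν)
      (fun k => (hFset_meas _).nullMeasurableSet) hanti ⟨0, measure_ne_top _ _⟩
    rw [hinter] at htend
    have hlb : ∀ k : ℕ, ENNReal.ofReal q ≤ ν {w : X × ℝ | scr w ≤ tstar + 1/((k:ℝ)+1)} := by
      intro k
      obtain ⟨t, htS, htlt⟩ := exists_lt_of_csInf_lt hSne
        (show sInf S < tstar + 1/((k:ℝ)+1) by
          rw [← htstar_def]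
          have : (0:ℝ) < 1/((k:ℝ)+1) := by positivity
          linarith)
      rw [hS_def, Set.mem_setOf_eq] at htS
      calc ENNReal.ofReal q ≤ ν {w : X × ℝ | scr w ≤ t} :=
          ENNReal.ofReal_le_of_le_toReal htS
        _ ≤ ν {w : X × ℝ | scr w ≤ tstar + 1/((k:ℝ)+1)} :=
          measure_mono (fun w hw => le_trans hw htlt.le)
    have hfin := ge_of_tendsto' htend hlb
    calc q = (ENNReal.ofReal q).toReal := by rw [ENNReal.toReal_ofReal]; linarith
      _ ≤ Ftr tstar := ENNReal.toReal_mono (measure_ne_top _ _) hfin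
  -- pstar ≤ q (left limit)
  set pstar : ℝ := (ν {w : X × ℝ | scr w < tstar}).toReal with hpstar_def
  have hpstar_le : pstar ≤ q := by
    have hmono : Monotone (fun k : ℕ => {w : X × ℝ | scr w ≤ tstar - 1/((k:ℝ)+1)}) := by
      intro i j hij w hw
      simp only [Set.mem_setOf_eq] at hw ⊢
      refine le_trans hw ?_
      have h1 : 1/((j:ℝ)+1) ≤ 1/((i:ℝ)+1) := by
        apply one_div_le_one_div_of_le (by positivity)
        exact_mod_cast add_le_add_left (Nat.cast_le.2 hij) 1
      linarith
    have hunion : (⋃ k : ℕ, {w : X × ℝ | scr w ≤ tstar - 1/((k:ℝ)+1)})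
        = {w : X × ℝ | scr w < tstar} := by
      ext w
      simp only [Set.mem_iUnion, Set.mem_setOf_eq]
      constructor
      · rintro ⟨k, hk⟩
        have : (0:ℝ) < 1/((k:ℝ)+1) := by positivity
        linarith
      · intro h
        obtain ⟨k, hk⟩ := exists_nat_one_div_lt (show (0:ℝ) < tstar - scr w by linarith)
        exact ⟨k, by linarith⟩
    have htend := tendsto_measure_iUnion_atTop (μ := ν) hmono
    rw [hunion] at htend
    have hub : ∀ k : ℕ, ν {w : X × ℝ | scr w ≤ tstar - 1/((k:ℝ)+1)} ≤ ENNReal.ofReal q := by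
      intro k
      have hnotS : tstar - 1/((k:ℝ)+1) ∉ S := by
        intro hin
        have := csInf_le hSbb hin
        rw [← htstar_def] at this
        have hk : (0:ℝ) < 1/((k:ℝ)+1) := by positivity
        linarith
      rw [hS_def, Set.mem_setOf_eq, not_le] at hnotS
      calc ν {w : X × ℝ | scr w ≤ tstar - 1/((k:ℝ)+1)}
          = ENNReal.ofReal (Ftr (tstar - 1/((k:ℝ)+1))) :=
            (ENNReal.ofReal_toReal (measure_ne_top _ _)).symm
        _ ≤ ENNReal.ofReal q := ENNReal.ofReal_le_ofReal hnotS.le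
    have hfin := le_of_tendsto' htend hub
    calc pstar ≤ (ENNReal.ofReal q).toReal :=
        ENNReal.toReal_mono (by simp) hfin
      _ = q := by rw [ENNReal.toReal_ofReal]; linarith
  -- index facts
  have hk01 : 1 ≤ ⌊α * ((m:ℝ) + 2)⌋₊ := Nat.le_floor (by exact_mod_cast hα2)
  have hk0m : ⌊α * ((m:ℝ) + 2)⌋₊ ≤ m + 1 := by
    have h1 : ⌊α * ((m:ℝ) + 2)⌋₊ < m + 2 := by
      rw [Nat.floor_lt (by positivity)]
      push_cast
      nlinarith
    omega
  have hK1 : 1 ≤ ⌈(1 - α) * ((m:ℝ) + 2)⌉₊ := by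
    have h1 : 0 < ⌈(1 - α) * ((m:ℝ) + 2)⌉₊ := Nat.ceil_pos.2 (by nlinarith)
    omega
  have hKm : ⌈(1 - α) * ((m:ℝ) + 2)⌉₊ ≤ m + 1 := by
    apply Nat.ceil_le.2
    push_cast
    nlinarith
  have hKk0 : ⌈(1 - α) * ((m:ℝ) + 2)⌉₊ + ⌊α * ((m:ℝ) + 2)⌋₊ ≤ m + 2 := by
    have h1 : ⌈(1 - α) * ((m:ℝ) + 2)⌉₊ ≤ m + 2 - ⌊α * ((m:ℝ) + 2)⌋₊ := by
      apply Nat.ceil_le.2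
      have h2 : ((m + 2 - ⌊α * ((m:ℝ) + 2)⌋₊ : ℕ) : ℝ)
          = (m:ℝ) + 2 - (⌊α * ((m:ℝ) + 2)⌋₊ : ℝ) := by
        rw [Nat.cast_sub (by omega)]
        push_cast
        ring
      rw [h2]
      have h3 : (⌊α * ((m:ℝ) + 2)⌋₊ : ℝ) ≤ α * ((m:ℝ) + 2) := Nat.floor_le (by positivity)
      nlinarith
    omega
  have hKge : ((m:ℝ) + 1) * (q + η) ≤ (⌈(1 - α) * ((m:ℝ) + 2)⌉₊ : ℝ) := by
    have h1 := Nat.le_ceil ((1 - α) * ((m:ℝ) + 2))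
    have h2 : q + η = 1 - α := by rw [hq_def]; ring
    rw [h2]
    calc ((m:ℝ) + 1) * (1 - α) ≤ (1 - α) * ((m:ℝ) + 2) := by nlinarith
      _ ≤ _ := h1
  -- joint laws
  set W0 : Ω → (Fin m → X × ℝ) := fun ω k => Zs k.succ ω with hW0_def
  have hW0meas : Measurable W0 := measurable_pi_iff.2 (fun k => hmeas _)
  set pm : Measure (Fin m → X × ℝ) := Measure.pi (fun _ => ν) with hpm_def
  have hlaw0 : Measure.map W0 ℙ = pm := joint_law_pi_succ ν Zs hmeas hindep hident
  set Wf : Ω → (Fin (m+1) → X × ℝ) := fun ω i => Zs i ω with hWf_def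
  have hWfmeas : Measurable Wf := measurable_pi_iff.2 (fun i => hmeas _)
  set Pm : Measure (Fin (m+1) → X × ℝ) := Measure.pi (fun _ => ν) with hPm_def
  have hlawf : Measure.map Wf ℙ = Pm := joint_law_pi ν Zs hmeas hindep hident
  have hTjmeas : ∀ j : Fin p, Measurable (fun z : Fin m → X × ℝ => T z j) := fun j =>
    (measurable_pi_apply j).comp hT
  have hβbar' : ∀ j, ∫ z, T z j ∂pm = βbar j := by
    intro j
    rw [hβbar]
    have h1 : ∀ ω : Ω, (fun k => Zs ((0 : Fin (m + 1)).succAbove k) ω) = W0 ω := by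
      intro ω; funext k; rw [Fin.succAbove_zero]
    simp only [h1]
    rw [← hlaw0, integral_map hW0meas.aemeasurable (hTjmeas j).aestronglyMeasurable]
  have hTbd : ∀ (j : Fin p) (i : Fin m) (z z' : Fin m → X × ℝ),
      (∀ l, l ≠ i → z l = z' l) → T z j - T z' j ≤ c₁ := by
    intro j i z z' hag
    have h1 : ‖μ (T z) - μ (T z')‖ ≤ c := hstab i z z' hag
    have h3 : ‖T z - T z'‖ ≤ c₁ := by
      rw [hc₁_def, le_div_iff₀ hκ₁]
      calc ‖T z - T z'‖ * κ₁ = κ₁ * ‖T z - T z'‖ := by ring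
        _ ≤ ‖μ (T z) - μ (T z')‖ := (hbilip _ _).1
        _ ≤ c := h1
    calc T z j - T z' j ≤ |T z j - T z' j| := le_abs_self _
      _ = ‖(T z - T z') j‖ := by rw [Pi.sub_apply, Real.norm_eq_abs]
      _ ≤ ‖T z - T z'‖ := norm_le_pi_norm _ j
      _ ≤ c₁ := h3
  -- bad events
  set Au : Set Ω := ⋃ j : Fin p, (W0 ⁻¹'
      ({z : Fin m → X × ℝ | t' ≤ T z j - βbar j} ∪
       {z : Fin m → X × ℝ | t' ≤ -(T z j) - -(βbar j)})) with hAu_def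
  set Bu : Set Ω := Wf ⁻¹' {z : Fin (m+1) → X × ℝ |
      ((⌈(1 - α) * ((m:ℝ) + 2)⌉₊ : ℝ)) - ((m:ℝ)+1) * pstar ≤
        (∑ i, if scr (z i) < tstar then (1:ℝ) else 0) - ((m:ℝ)+1) * pstar} with hBu_def
  -- bound on Au
  have hAbound : ℙ Au ≤ ENNReal.ofReal ε := by
    rcases Nat.eq_zero_or_pos m with hm0 | hmpos
    · subst hm0
      have hTconst : ∀ (z : Fin 0 → X × ℝ) (j : Fin p), T z j = βbar j := by
        intro z j
        rw [← hβbar' j]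
        have h1 : (fun w : Fin 0 → X × ℝ => T w j) = fun _ => T z j := by
          funext w; rw [Subsingleton.elim w z]
        rw [h1, integral_const]
        simp
      have hAe : Au = ∅ := by
        rw [hAu_def]
        apply Set.eq_empty_iff_forall_notMem.2
        intro ω hω
        rw [Set.mem_iUnion] at hω
        obtain ⟨j, hj⟩ := hω
        rw [Set.mem_preimage, Set.mem_union] at hj
        rcases hj with hj | hj <;> rw [Set.mem_setOf_eq, hTconst] at hj <;>
          simp at hj <;> linarith
      rw [hAe]
      simp
    · have hsets_meas : ∀ j : Fin p,
          MeasurableSet {z : Fin m → X × ℝ | t' ≤ T z j - βbar j} := fun j =>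
        measurableSet_le measurable_const ((hTjmeas j).sub measurable_const)
      have hsets_meas2 : ∀ j : Fin p,
          MeasurableSet {z : Fin m → X × ℝ | t' ≤ -(T z j) - -(βbar j)} := fun j =>
        measurableSet_le measurable_const (((hTjmeas j).neg).sub measurable_const)
      have hexp_le : ENNReal.ofReal (Real.exp (-2 * t' ^ 2 / (m * c₁ ^ 2))) ≤
          ENNReal.ofReal (ε / (2 * p)) := by
        apply ENNReal.ofReal_le_ofReal
        have ht'sq : t' ^ 2 = c₁ ^ 2 * (((m:ℝ)+1)/2 * Real.log (2 * p / ε)) := by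
          rw [ht'_def, mul_pow, Real.sq_sqrt (by positivity)]
        have hm1 : (1:ℝ) ≤ m := by exact_mod_cast hmpos
        have hle : Real.log (2 * p / ε) ≤ 2 * t' ^ 2 / (m * c₁ ^ 2) := by
          rw [le_div_iff₀ (by positivity), ht'sq]
          nlinarith [hlogp.le, sq_nonneg c₁]
        calc Real.exp (-2 * t' ^ 2 / (m * c₁ ^ 2))
            = Real.exp (-(2 * t' ^ 2 / (m * c₁ ^ 2))) := by ring_nf
          _ ≤ Real.exp (-Real.log (2 * p / ε)) := Real.exp_le_exp.2 (by linarith)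
          _ = (2 * p / ε)⁻¹ := by rw [Real.exp_neg, Real.exp_log (by positivity)]
          _ = ε / (2 * p) := by rw [inv_div]
      calc ℙ Au ≤ ∑ j : Fin p, ℙ (W0 ⁻¹'
            ({z : Fin m → X × ℝ | t' ≤ T z j - βbar j} ∪
             {z : Fin m → X × ℝ | t' ≤ -(T z j) - -(βbar j)})) := by
            rw [hAu_def]
            exact measure_iUnion_fintype_le _ _
        _ ≤ ∑ _j : Fin p, (ENNReal.ofReal (ε / (2*p)) + ENNReal.ofReal (ε / (2*p))) := by
            apply Finset.sum_le_sum
            intro j _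
            rw [Set.preimage_union]
            refine le_trans (measure_union_le _ _) ?_
            apply add_le_add
            · rw [← Measure.map_apply hW0meas (hsets_meas j), hlaw0]
              refine le_trans (mcdiarmid_tail ν hc₁pos hmpos (fun z => T z j) (hTjmeas j)
                (fun i z z' hag => hTbd j i z z' hag) (hβbar' j) ht'pos.le) hexp_le
            · rw [← Measure.map_apply hW0meas (hsets_meas2 j), hlaw0]
              have hmean : ∫ z, -(T z j) ∂pm = -(βbar j) := by
                rw [integral_neg, hβbar' j]
              refine le_trans (mcdiarmid_tail ν hc₁pos hmpos (fun z => -(T z j)) (hTjmeas j).neg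
                (fun i z z' hag => by
                  have h := hTbd j i z' z (fun l hl => (hag l hl).symm)
                  show -(T z j) - -(T z' j) ≤ c₁
                  linarith) hmean ht'pos.le) hexp_le
        _ = ENNReal.ofReal ε := by
            rw [← ENNReal.ofReal_add (by positivity) (by positivity)]
            rw [Finset.sum_const, Finset.card_univ, Fintype.card_fin]
            rw [show ε / (2*(p:ℝ)) + ε / (2*(p:ℝ)) = ε / (p:ℝ) by field_simp; ring]
            rw [nsmul_eq_mul, ← ENNReal.ofReal_natCast p,
              ← ENNReal.ofReal_mul (Nat.cast_nonneg p)]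
            congr 1
            field_simp
  -- bound on Bu
  set Fs : (Fin (m+1) → X × ℝ) → ℝ :=
    fun z => ∑ i, if scr (z i) < tstar then (1:ℝ) else 0 with hFs_def
  have hSmeas : MeasurableSet {w : X × ℝ | scr w < tstar} :=
    measurableSet_lt hscrmeas measurable_const
  have hFsmeas : Measurable Fs := by
    apply Finset.measurable_sum
    intro i _
    exact Measurable.ite (hSmeas.preimage (measurable_pi_apply i))
      measurable_const measurable_const
  have hFsbd : ∀ (i : Fin (m+1)) (z z' : Fin (m+1) → X × ℝ),
      (∀ j, j ≠ i → z j = z' j) → Fs z - Fs z' ≤ 1 := by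
    intro i z z' hag
    rw [hFs_def]
    rw [← Finset.sum_sub_distrib]
    have h0 : ∀ j ∈ Finset.univ, j ≠ i →
        ((if scr (z j) < tstar then (1:ℝ) else 0) -
         (if scr (z' j) < tstar then (1:ℝ) else 0)) = 0 := by
      intro j _ hj
      rw [hag j hj]; ring
    rw [Finset.sum_eq_single_of_mem i (Finset.mem_univ i) h0]
    split_ifs <;> norm_num
  have hFsmean : ∫ z, Fs z ∂Pm = ((m:ℝ)+1) * pstar := by
    rw [← hlawf, integral_map hWfmeas.aemeasurable hFsmeas.aestronglyMeasurable]
    simp only [hFs_def, hWf_def]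
    rw [integral_finset_sum]
    · have h2 : ∀ i : Fin (m+1),
          ∫ ω, (if scr (Zs i ω) < tstar then (1:ℝ) else 0) ∂ℙ = pstar := by
        intro i
        have hg : Measurable (fun w : X × ℝ => if scr w < tstar then (1:ℝ) else 0) :=
          Measurable.ite hSmeas measurable_const measurable_const
        calc ∫ ω, (if scr (Zs i ω) < tstar then (1:ℝ) else 0) ∂ℙ
            = ∫ w, (if scr w < tstar then (1:ℝ) else 0) ∂(Measure.map (Zs i) ℙ) :=
              (integral_map (hmeas i).aemeasurable hg.aestronglyMeasurable).symm
          _ = ∫ w, (if scr w < tstar then (1:ℝ) else 0) ∂ν := by rw [hident i]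
          _ = pstar := by
              rw [hpstar_def]
              rw [show (fun w : X × ℝ => if scr w < tstar then (1:ℝ) else 0)
                  = Set.indicator {w : X × ℝ | scr w < tstar} (fun _ => (1:ℝ)) from
                funext (fun w => by
                  by_cases h : scr w < tstar <;> simp [Set.indicator_apply, h])]
              rw [integral_indicator_const (1:ℝ) hSmeas]
              simp [Measure.real_def]
      rw [Finset.sum_congr rfl (fun i _ => h2 i)]
      rw [Finset.sum_const, Finset.card_univ, Fintype.card_fin, nsmul_eq_mul]
      push_cast
      ring
    · intro i _
      exact integrable_of_abs_le _
        ((Measurable.ite (hSmeas.preimage (hmeas i)) measurable_const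
          measurable_const)).aestronglyMeasurable 1
        (fun ω => by split_ifs <;> norm_num)
  have hBset_meas : MeasurableSet {z : Fin (m+1) → X × ℝ |
      ((⌈(1 - α) * ((m:ℝ) + 2)⌉₊ : ℝ)) - ((m:ℝ)+1) * pstar ≤ Fs z - ((m:ℝ)+1) * pstar} :=
    measurableSet_le measurable_const (hFsmeas.sub measurable_const)
  have hsK : 0 ≤ ((⌈(1 - α) * ((m:ℝ) + 2)⌉₊ : ℝ)) - ((m:ℝ)+1) * pstar ∧
      ((m:ℝ)+1) * η ≤ ((⌈(1 - α) * ((m:ℝ) + 2)⌉₊ : ℝ)) - ((m:ℝ)+1) * pstar := by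
    have hm0 : (0:ℝ) ≤ (m:ℝ) + 1 := by positivity
    constructor <;> nlinarith [hKge, hpstar_le, hη0]
  have hBbound : ℙ Bu ≤ ENNReal.ofReal δ := by
    rw [hBu_def, ← Measure.map_apply hWfmeas hBset_meas, hlawf]
    refine le_trans (mcdiarmid_tail ν one_pos (Nat.succ_pos m) Fs hFsmeas hFsbd
      hFsmean hsK.1) ?_
    apply ENNReal.ofReal_le_ofReal
    have hη2 : η ^ 2 = Real.log (2/δ) / (2 * ((m:ℝ)+1)) := by
      rw [hη_def, Real.sq_sqrt (div_nonneg hlogd (by positivity))]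
    have hsq2 : (((m:ℝ)+1) * η) ^ 2 ≤
        (((⌈(1 - α) * ((m:ℝ) + 2)⌉₊ : ℝ)) - ((m:ℝ)+1) * pstar) ^ 2 :=
      pow_le_pow_left₀ (by positivity) hsK.2 2
    have hcast : (((m+1 : ℕ)):ℝ) = (m:ℝ) + 1 := by push_cast; ring
    calc Real.exp (-2 * (((⌈(1 - α) * ((m:ℝ) + 2)⌉₊ : ℝ)) - ((m:ℝ)+1) * pstar) ^ 2 /
            (((m+1 : ℕ):ℝ) * 1 ^ 2))
        ≤ Real.exp (-2 * (((m:ℝ)+1) * η) ^ 2 / (((m:ℝ)+1) * 1 ^ 2)) := by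
          apply Real.exp_le_exp.2
          rw [hcast]
          have hD : (0:ℝ) < ((m:ℝ)+1) * 1 ^ 2 := by positivity
          rw [div_le_div_iff₀ hD hD]
          nlinarith [hsq2]
      _ = Real.exp (-(Real.log (2/δ))) := by
          congr 1
          rw [mul_pow, hη2]
          field_simp
      _ = δ / 2 := by rw [Real.exp_neg, Real.exp_log (by positivity), inv_div]
      _ ≤ δ := by linarith
  -- the key pointwise inclusion
  have hsubset : Ev ⊆ Au ∪ Bu := by
    intro ω hω
    by_contra hAB
    rw [Set.mem_union] at hAB
    push_neg at hAB
    obtain ⟨hnA, hnB⟩ := hAB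
    rw [hEv_def, Set.mem_setOf_eq] at hω
    rw [hthr_eq] at hω
    -- predictor deviation bounds
    have hβ0 : ‖T (W0 ω) - βbar‖ ≤ t' := by
      rw [pi_norm_le_iff_of_nonneg ht'pos.le]
      intro j
      rw [Pi.sub_apply, Real.norm_eq_abs]
      by_contra hcon
      push_neg at hcon
      apply hnA
      rw [hAu_def, Set.mem_iUnion]
      refine ⟨j, ?_⟩
      rw [Set.mem_preimage, Set.mem_union]
      rcases lt_abs.1 hcon with h | h
      · left; exact h.le
      · right; rw [Set.mem_setOf_eq]; linarith
    have hμclose : ∀ i : Fin (m+1), ∀ x : X,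
        |μ (T (fun k => Zs (i.succAbove k) ω)) x - μ βbar x| ≤ ε' := by
      intro i x
      have h1 : ‖μ (T (fun k => Zs (i.succAbove k) ω)) - μ (T (W0 ω))‖ ≤ c :=
        loo_stab hc.le (fun z : Fin m → X × ℝ => μ (T z))
          (fun σ z => by show μ (T (z ∘ σ)) = μ (T z); rw [hsym]) hstab (fun i' => Zs i' ω) i
      have h2 : ‖T (fun k => Zs (i.succAbove k) ω) - T (W0 ω)‖ ≤ c₁ := by
        rw [hc₁_def, le_div_iff₀ hκ₁]
        calc ‖T (fun k => Zs (i.succAbove k) ω) - T (W0 ω)‖ * κ₁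
            = κ₁ * ‖T (fun k => Zs (i.succAbove k) ω) - T (W0 ω)‖ := by ring
          _ ≤ ‖μ (T (fun k => Zs (i.succAbove k) ω)) - μ (T (W0 ω))‖ := (hbilip _ _).1
          _ ≤ c := h1
      have h3 : ‖T (fun k => Zs (i.succAbove k) ω) - βbar‖ ≤ c₁ + t' := by
        calc ‖T (fun k => Zs (i.succAbove k) ω) - βbar‖
            = ‖(T (fun k => Zs (i.succAbove k) ω) - T (W0 ω)) + (T (W0 ω) - βbar)‖ := by
              rw [sub_add_sub_cancel]
          _ ≤ ‖T (fun k => Zs (i.succAbove k) ω) - T (W0 ω)‖ + ‖T (W0 ω) - βbar‖ :=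
              norm_add_le _ _
          _ ≤ c₁ + t' := add_le_add h2 hβ0
      have h4 : ‖μ (T (fun k => Zs (i.succAbove k) ω)) - μ βbar‖ ≤ ε' := by
        calc ‖μ (T (fun k => Zs (i.succAbove k) ω)) - μ βbar‖
            ≤ κ₂ * ‖T (fun k => Zs (i.succAbove k) ω) - βbar‖ := (hbilip _ _).2
          _ ≤ κ₂ * (c₁ + t') := mul_le_mul_of_nonneg_left h3 hκ₂.le
          _ = ε' := by rw [hε'_def]
      have h5 := BoundedContinuousFunction.norm_coe_le_norm
        (μ (T (fun k => Zs (i.succAbove k) ω)) - μ βbar) x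
      rw [BoundedContinuousFunction.coe_sub, Pi.sub_apply, Real.norm_eq_abs] at h5
      linarith
    -- counting from ω ∉ Bu
    have hcount : (Finset.univ.filter
        (fun i : Fin (m+1) => scr (Zs i ω) < tstar)).card ≤ ⌈(1 - α) * ((m:ℝ) + 2)⌉₊ - 1 := by
      have hFω : Fs (Wf ω) = ((Finset.univ.filter
          (fun i : Fin (m+1) => scr (Zs i ω) < tstar)).card : ℝ) := by
        simp only [hFs_def, hWf_def, Finset.sum_boole]
      have hnB' : Fs (Wf ω) < ((⌈(1 - α) * ((m:ℝ) + 2)⌉₊ : ℝ)) := by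
        by_contra hge
        push_neg at hge
        exact hnB (by rw [hBu_def, Set.mem_preimage, Set.mem_setOf_eq]; linarith)
      rw [hFω] at hnB'
      have h6 : (Finset.univ.filter
          (fun i : Fin (m+1) => scr (Zs i ω) < tstar)).card < ⌈(1 - α) * ((m:ℝ) + 2)⌉₊ := by
        exact_mod_cast hnB'
      omega
    have hcount2 : m + 2 - ⌈(1 - α) * ((m:ℝ) + 2)⌉₊ ≤ (Finset.univ.filter
        (fun i : Fin (m+1) => tstar ≤ scr (Zs i ω))).card := by
      have h7 := Finset.card_filter_add_card_filter_not
        (s := Finset.univ) (p := fun i : Fin (m+1) => scr (Zs i ω) < tstar)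
      have heqf : (Finset.univ.filter (fun i : Fin (m+1) => ¬ scr (Zs i ω) < tstar))
          = Finset.univ.filter (fun i : Fin (m+1) => tstar ≤ scr (Zs i ω)) := by
        apply Finset.filter_congr
        intro i _
        simp [not_lt]
      rw [heqf, Finset.card_univ, Fintype.card_fin] at h7
      omega
    -- bound the conditional miscoverage
    have hval : (ν {z : X × ℝ |
            ¬ (kthSmallest (fun i : Fin (m + 1) =>
                  μ (T (fun k => Zs (i.succAbove k) ω)) z.1 -
                    |(Zs i ω).2 - μ (T (fun k => Zs (i.succAbove k) ω)) (Zs i ω).1|)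
                  ⌊α * (m + 2)⌋₊ ≤ (z.2 : EReal) ∧
                (z.2 : EReal) ≤ kthSmallest (fun i : Fin (m + 1) =>
                  μ (T (fun k => Zs (i.succAbove k) ω)) z.1 +
                    |(Zs i ω).2 - μ (T (fun k => Zs (i.succAbove k) ω)) (Zs i ω).1|)
                  ⌈(1 - α) * (m + 2)⌉₊)}).toReal ≤ α + η + 2 * L * ε' := by
      have hMsub : {z : X × ℝ |
            ¬ (kthSmallest (fun i : Fin (m + 1) =>
                  μ (T (fun k => Zs (i.succAbove k) ω)) z.1 -
                    |(Zs i ω).2 - μ (T (fun k => Zs (i.succAbove k) ω)) (Zs i ω).1|)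
                  ⌊α * (m + 2)⌋₊ ≤ (z.2 : EReal) ∧
                (z.2 : EReal) ≤ kthSmallest (fun i : Fin (m + 1) =>
                  μ (T (fun k => Zs (i.succAbove k) ω)) z.1 +
                    |(Zs i ω).2 - μ (T (fun k => Zs (i.succAbove k) ω)) (Zs i ω).1|)
                  ⌈(1 - α) * (m + 2)⌉₊)} ⊆ {z : X × ℝ | tstar - 2*ε' < scr z} := by
        intro z hz
        rw [Set.mem_setOf_eq] at hz ⊢
        by_contra hsc
        push_neg at hsc
        apply hz
        have hzu : z.2 - μ βbar z.1 ≤ scr z := le_abs_self _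
        have hzl : -(scr z) ≤ z.2 - μ βbar z.1 := neg_abs_le _
        have hRbound : ∀ i : Fin (m+1),
            scr (Zs i ω) - ε' ≤
              |(Zs i ω).2 - μ (T (fun k => Zs (i.succAbove k) ω)) (Zs i ω).1| ∧
            |(Zs i ω).2 - μ (T (fun k => Zs (i.succAbove k) ω)) (Zs i ω).1| ≤
              scr (Zs i ω) + ε' := by
          intro i
          have hab : |((Zs i ω).2 - μ βbar (Zs i ω).1) -
              ((Zs i ω).2 - μ (T (fun k => Zs (i.succAbove k) ω)) (Zs i ω).1)| ≤ ε' := by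
            rw [show ((Zs i ω).2 - μ βbar (Zs i ω).1) -
                ((Zs i ω).2 - μ (T (fun k => Zs (i.succAbove k) ω)) (Zs i ω).1)
                = μ (T (fun k => Zs (i.succAbove k) ω)) (Zs i ω).1 - μ βbar (Zs i ω).1 by ring]
            exact hμclose i _
          have h1 := abs_sub_abs_le_abs_sub ((Zs i ω).2 - μ βbar (Zs i ω).1)
            ((Zs i ω).2 - μ (T (fun k => Zs (i.succAbove k) ω)) (Zs i ω).1)
          have h2 := abs_sub_abs_le_abs_sub
            ((Zs i ω).2 - μ (T (fun k => Zs (i.succAbove k) ω)) (Zs i ω).1)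
            ((Zs i ω).2 - μ βbar (Zs i ω).1)
          have hab2 : |((Zs i ω).2 - μ (T (fun k => Zs (i.succAbove k) ω)) (Zs i ω).1) -
              ((Zs i ω).2 - μ βbar (Zs i ω).1)| ≤ ε' := by
            rw [show ((Zs i ω).2 - μ (T (fun k => Zs (i.succAbove k) ω)) (Zs i ω).1) -
                ((Zs i ω).2 - μ βbar (Zs i ω).1)
                = μ βbar (Zs i ω).1 - μ (T (fun k => Zs (i.succAbove k) ω)) (Zs i ω).1 by ring,
              abs_sub_comm]
            exact hμclose i _
          have hscr_eq : scr (Zs i ω) = |(Zs i ω).2 - μ βbar (Zs i ω).1| := rfl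
          rw [hscr_eq]
          constructor <;> linarith
        constructor
        · -- lower endpoint
          apply kthSmallest_le _ _ hk01 hk0m z.2
          have hsubf : Finset.univ.filter (fun i : Fin (m+1) => tstar ≤ scr (Zs i ω)) ⊆
              Finset.univ.filter (fun i : Fin (m+1) =>
                μ (T (fun k => Zs (i.succAbove k) ω)) z.1 -
                  |(Zs i ω).2 - μ (T (fun k => Zs (i.succAbove k) ω)) (Zs i ω).1| ≤ z.2) := by
            intro i hi
            rw [Finset.mem_filter] at hi ⊢
            refine ⟨Finset.mem_univ _, ?_⟩
            have hsi := hi.2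
            have hR := (hRbound i).1
            have hμx := (abs_le.1 (hμclose i z.1)).2
            linarith
          calc ⌊α * ((m:ℝ) + 2)⌋₊ ≤ m + 2 - ⌈(1 - α) * ((m:ℝ) + 2)⌉₊ := by omega
            _ ≤ (Finset.univ.filter (fun i : Fin (m+1) => tstar ≤ scr (Zs i ω))).card :=
              hcount2
            _ ≤ _ := Finset.card_le_card hsubf
        · -- upper endpoint
          apply le_kthSmallest _ _ hK1 hKm z.2
          have hsubf2 : Finset.univ.filter (fun i : Fin (m+1) =>
              μ (T (fun k => Zs (i.succAbove k) ω)) z.1 +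
                |(Zs i ω).2 - μ (T (fun k => Zs (i.succAbove k) ω)) (Zs i ω).1| < z.2) ⊆
              Finset.univ.filter (fun i : Fin (m+1) => scr (Zs i ω) < tstar) := by
            intro i hi
            rw [Finset.mem_filter] at hi ⊢
            refine ⟨Finset.mem_univ _, ?_⟩
            have hhi := hi.2
            have hR := (hRbound i).1
            have hμx := (abs_le.1 (hμclose i z.1)).1
            linarith
          exact le_trans (Finset.card_le_card hsubf2) hcount
      have hF_eq : ∀ t : ℝ, Ftr t = (ν {z : X × ℝ | |z.2 - μ βbar z.1| ≤ t}).toReal :=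
        fun t => rfl
      have hcompl : {z : X × ℝ | tstar - 2*ε' < scr z}
          = {w : X × ℝ | scr w ≤ tstar - 2*ε'}ᶜ := by
        ext w
        simp [not_le]
      have hdecomp : Ftr (tstar - 2*ε') + (ν {z : X × ℝ | tstar - 2*ε' < scr z}).toReal
          = 1 := by
        rw [hcompl]
        rw [← ENNReal.toReal_add (measure_ne_top _ _) (measure_ne_top _ _),
          measure_add_measure_compl (hFset_meas _), measure_univ]
        simp
      have hdens' := hdens (tstar - 2*ε') tstar (by linarith)
      rw [← hF_eq, ← hF_eq] at hdens'
      have hring : tstar - (tstar - 2*ε') = 2*ε' := by ring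
      rw [hring] at hdens'
      calc (ν {z : X × ℝ |
            ¬ (kthSmallest (fun i : Fin (m + 1) =>
                  μ (T (fun k => Zs (i.succAbove k) ω)) z.1 -
                    |(Zs i ω).2 - μ (T (fun k => Zs (i.succAbove k) ω)) (Zs i ω).1|)
                  ⌊α * (m + 2)⌋₊ ≤ (z.2 : EReal) ∧
                (z.2 : EReal) ≤ kthSmallest (fun i : Fin (m + 1) =>
                  μ (T (fun k => Zs (i.succAbove k) ω)) z.1 +
                    |(Zs i ω).2 - μ (T (fun k => Zs (i.succAbove k) ω)) (Zs i ω).1|)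
                  ⌈(1 - α) * (m + 2)⌉₊)}).toReal
          ≤ (ν {z : X × ℝ | tstar - 2*ε' < scr z}).toReal :=
            ENNReal.toReal_mono (measure_ne_top _ _) (measure_mono hMsub)
        _ = 1 - Ftr (tstar - 2*ε') := by linarith
        _ ≤ α + η + 2 * L * ε' := by
            have h8 : q ≤ Ftr tstar := hFtstar
            rw [hq_def] at h8
            linarith
    linarith
  -- conclusion
  have hfinal : ℙ Ev ≤ ENNReal.ofReal (ε + δ) := by
    calc ℙ Ev ≤ ℙ (Au ∪ Bu) := measure_mono hsubset
      _ ≤ ℙ Au + ℙ Bu := measure_union_le _ _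
      _ ≤ ENNReal.ofReal ε + ENNReal.ofReal δ := add_le_add hAbound hBbound
      _ = ENNReal.ofReal (ε + δ) := (ENNReal.ofReal_add hε.le hδ.le).symm
  exact ENNReal.toReal_le_of_le_ofReal (by linarith) hfinal
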